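/- Let d ≥ 2, N ≥ 1, u ∈ (Z/dZ)^N, and β ∈ Z/dZ. Define σ(β) to be the number of φ ∈ {0,1}^N such that Σ_{i=1}^N u^{(i)} φ^{(i)} = β in Z/dZ. If σ(β) ≥ 1, then σ(β) ≥ 2^{N−(d−1)} (in particular, when N ≥ d−1 this is a nontrivial bound; for N < d−1 the bound 2^{N-(d-1)} is interpreted as being at most 1). -/
import Mathlib

open Finset

variable {d : ℕ} [NeZero d]

def Fcnt (N : ℕ) (u : Fin N → ZMod d) (β : ZMod d) : ℕ :=
  (Finset.univ.filter (fun φ : Fin N → Bool => ∑ i, (if φ i then u i else 0) = β)).card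

def Aset (N : ℕ) (u : Fin N → ZMod d) : Finset (ZMod d) :=
  Finset.univ.image (fun φ : Fin N → Bool => ∑ i, (if φ i then u i else 0))

lemma mem_Aset_iff {N : ℕ} {u : Fin N → ZMod d} {β : ZMod d} :
    β ∈ Aset N u ↔ 0 < Fcnt N u β := by
  rw [Fcnt, Finset.card_pos]
  simp [Aset, Finset.filter_nonempty_iff, Finset.mem_image]

lemma Fcnt_succ (N : ℕ) (u : Fin (N + 1) → ZMod d) (β : ZMod d) :
    Fcnt (N + 1) u β = Fcnt N (u ∘ Fin.succ) β + Fcnt N (u ∘ Fin.succ) (β - u 0) := by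
  classical
  simp only [Fcnt, Finset.card_filter]
  rw [← Equiv.sum_comp (Fin.consEquiv (fun _ : Fin (N+1) => Bool))
      (fun φ => if (∑ i, (if φ i then u i else 0)) = β then (1:ℕ) else 0)]
  rw [Fintype.sum_prod_type, Fintype.sum_bool]
  simp only [Fin.consEquiv_apply, Fin.sum_univ_succ, Fin.cons_zero, Fin.cons_succ, if_true, if_false,
    Function.comp_apply, zero_add]
  rw [add_comm]
  congr 1
  · apply Finset.sum_congr rfl
    intro ψ _
    apply if_congr _ rfl rfl
    simp
  · apply Finset.sum_congr rfl
    intro ψ _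
    apply if_congr _ rfl rfl
    simp [eq_sub_iff_add_eq, add_comm]


lemma Aset_nonempty (N : ℕ) (u : Fin N → ZMod d) : (Aset N u).Nonempty :=
  ⟨_, Finset.mem_image_of_mem _ (Finset.mem_univ (fun _ => false))⟩

lemma mem_Aset_succ_of_left {N : ℕ} {u : Fin (N + 1) → ZMod d} {β : ZMod d}
    (h : β ∈ Aset N (u ∘ Fin.succ)) : β ∈ Aset (N + 1) u := by
  rw [mem_Aset_iff] at h ⊢
  rw [Fcnt_succ]
  omega

lemma mem_Aset_succ_of_right {N : ℕ} {u : Fin (N + 1) → ZMod d} {β : ZMod d}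
    (h : β - u 0 ∈ Aset N (u ∘ Fin.succ)) : β ∈ Aset (N + 1) u := by
  rw [mem_Aset_iff] at h ⊢
  rw [Fcnt_succ]
  omega

lemma key (N : ℕ) (u : Fin N → ZMod d) (β : ZMod d) (hβ : β ∈ Aset N u) :
    2 ^ N ≤ Fcnt N u β * 2 ^ ((Aset N u).card - 1) := by
  induction N generalizing β with
  | zero =>
    have hA : Aset 0 u = {0} := by
      apply Finset.eq_singleton_iff_unique_mem.2
      constructor
      · simpa [Aset] using ⟨fun _ => false, rfl⟩
      · intro x hx
        simp [Aset] at hx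
        exact hx
    rw [hA] at hβ ⊢
    have hβ0 : β = 0 := Finset.mem_singleton.1 hβ
    subst hβ0
    have h1 : Fcnt 0 u 0 = 1 := by simp [Fcnt]
    simp [h1]
  | succ N ih =>
    set u' : Fin N → ZMod d := u ∘ Fin.succ with hu'
    set A' := Aset N u' with hA'
    set A := Aset (N + 1) u with hA
    have hsub : A' ⊆ A := fun γ hγ => mem_Aset_succ_of_left hγ
    have hcard : A'.card ≤ A.card := Finset.card_le_card hsub
    have hA'pos : 1 ≤ A'.card := Finset.card_pos.2 (Aset_nonempty N u')
    have hrec : Fcnt (N + 1) u β = Fcnt N u' β + Fcnt N u' (β - u 0) := Fcnt_succ N u β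
    -- key card step lemma
    have hposs : 0 < Fcnt N u' β + Fcnt N u' (β - u 0) := by
      rw [← hrec]; exact (mem_Aset_iff).1 hβ
    have hcase : (β ∈ A' ∧ β - u 0 ∈ A') ∨
        ((β ∈ A' ∨ β - u 0 ∈ A') ∧ A'.card + 1 ≤ A.card) := by
      by_cases h1 : β ∈ A' <;> by_cases h2 : β - u 0 ∈ A'
      · exact Or.inl ⟨h1, h2⟩
      · -- β ∈ A', β - u 0 ∉ A'
        refine Or.inr ⟨Or.inl h1, ?_⟩
        by_contra hle
        have heq : A' = A := Finset.eq_of_subset_of_card_le hsub (by omega)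
        have himg : A'.image (· + u 0) ⊆ A := by
          intro γ hγ
          obtain ⟨δ, hδ, rfl⟩ := Finset.mem_image.1 hγ
          exact mem_Aset_succ_of_right (by simpa using hδ)
        have hic : (A'.image (· + u 0)).card = A'.card :=
          Finset.card_image_of_injective _ (add_left_injective _)
        rw [heq] at himg hic
        have himgeq : A.image (· + u 0) = A :=
          Finset.eq_of_subset_of_card_le himg (le_of_eq hic.symm)
        rw [heq, ← himgeq] at h1
        obtain ⟨δ, hδ, hδe⟩ := Finset.mem_image.1 h1
        refine h2 ?_
        rw [heq]
        rw [← hδe]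
        simpa using hδ
      · -- β ∉ A', β - u 0 ∈ A'
        refine Or.inr ⟨Or.inr h2, ?_⟩
        by_contra hle
        have heq : A' = A := Finset.eq_of_subset_of_card_le hsub (by omega)
        exact h1 (by rw [heq]; exact hβ)
      · exfalso
        have : 0 < Fcnt N u' β ∨ 0 < Fcnt N u' (β - u 0) := by omega
        rcases this with h | h
        · exact h1 (mem_Aset_iff.2 h)
        · exact h2 (mem_Aset_iff.2 h)
    rcases hcase with ⟨h1, h2⟩ | ⟨h12, hc⟩
    · have i1 := ih u' β h1
      have i2 := ih u' (β - u 0) h2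
      have hm : 2 ^ (A'.card - 1) ≤ 2 ^ (A.card - 1) :=
        Nat.pow_le_pow_right (by norm_num) (by omega)
      calc 2 ^ (N + 1) = 2 ^ N + 2 ^ N := by ring
        _ ≤ Fcnt N u' β * 2 ^ (A'.card - 1) + Fcnt N u' (β - u 0) * 2 ^ (A'.card - 1) :=
            Nat.add_le_add i1 i2
        _ = (Fcnt N u' β + Fcnt N u' (β - u 0)) * 2 ^ (A'.card - 1) := by ring
        _ ≤ Fcnt (N + 1) u β * 2 ^ (A.card - 1) := by
            rw [hrec]; exact Nat.mul_le_mul_left _ hm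
    · have hm : 2 * 2 ^ (A'.card - 1) ≤ 2 ^ (A.card - 1) := by
        have : 2 * 2 ^ (A'.card - 1) = 2 ^ (A'.card - 1 + 1) := by ring
        rw [this]
        exact Nat.pow_le_pow_right (by norm_num) (by omega)
      have hF : 2 ^ N ≤ Fcnt (N + 1) u β * 2 ^ (A'.card - 1) := by
        rcases h12 with h | h
        · calc 2 ^ N ≤ Fcnt N u' β * 2 ^ (A'.card - 1) := ih u' β h
            _ ≤ Fcnt (N + 1) u β * 2 ^ (A'.card - 1) := by
                apply Nat.mul_le_mul_right; omega
        · calc 2 ^ N ≤ Fcnt N u' (β - u 0) * 2 ^ (A'.card - 1) := ih u' _ h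
            _ ≤ Fcnt (N + 1) u β * 2 ^ (A'.card - 1) := by
                apply Nat.mul_le_mul_right; omega
      calc 2 ^ (N + 1) = 2 * 2 ^ N := by ring
        _ ≤ 2 * (Fcnt (N + 1) u β * 2 ^ (A'.card - 1)) := Nat.mul_le_mul_left _ hF
        _ = Fcnt (N + 1) u β * (2 * 2 ^ (A'.card - 1)) := by ring
        _ ≤ Fcnt (N + 1) u β * 2 ^ (A.card - 1) := Nat.mul_le_mul_left _ hm

example : True := trivial

lemma final_bound (d N : ℕ) [NeZero d] (hd : 2 ≤ d)
    (u : Fin N → ZMod d) (β : ZMod d) (hpos : 1 ≤ Fcnt N u β) :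
    (2 : ℝ) ^ ((N : ℤ) - ((d : ℤ) - 1)) ≤ (Fcnt N u β : ℝ) := by
  have hmem : β ∈ Aset N u := mem_Aset_iff.2 hpos
  have hk := key N u β hmem
  have hAle : (Aset N u).card ≤ d := by
    have h := Finset.card_le_univ (Aset N u)
    rwa [ZMod.card d] at h
  have h2 : 2 ^ N ≤ Fcnt N u β * 2 ^ (d - 1) :=
    le_trans hk (Nat.mul_le_mul le_rfl
      (Nat.pow_le_pow_right (by norm_num) (Nat.sub_le_sub_right hAle 1)))
  have hdd : ((d : ℤ) - 1) = ((d - 1 : ℕ) : ℤ) := by omega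
  rw [hdd, zpow_sub₀ (two_ne_zero), zpow_natCast, zpow_natCast]
  rw [div_le_iff₀ (by positivity)]
  exact_mod_cast h2

theorem sigma_lower_bound (d N : ℕ) [NeZero d] (hd : 2 ≤ d) (hN : 1 ≤ N)
    (u : Fin N → ZMod d) (β : ZMod d)
    (hpos : 1 ≤ Fintype.card {φ : Fin N → Bool // ∑ i, (if φ i then u i else 0) = β}) :
    (2 : ℝ) ^ ((N : ℤ) - ((d : ℤ) - 1)) ≤
      (Fintype.card {φ : Fin N → Bool // ∑ i, (if φ i then u i else 0) = β} : ℝ) := by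
  classical
  have hcard_eq : Fintype.card {φ : Fin N → Bool // ∑ i, (if φ i then u i else 0) = β}
      = Fcnt N u β := by
    rw [Fcnt, Fintype.card_subtype]
  rw [hcard_eq]
  exact final_bound d N hd u β (hcard_eq ▸ hpos)
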